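/- For any Hausdorff space X, |X| ≤ we(X)^{Δ₂(X)}, where we(X) is the weak extent and Δ₂(X) is the rank 2 diagonal degree. -/

import Mathlib

open Set Topology

universe u

namespace DiagonalPaper

/-- The star of a set `A` with respect to a family `𝒰`:
the union of all members of `𝒰` meeting `A`. -/
def st {X : Type u} (A : Set X) (𝒰 : Set (Set X)) : Set X :=
  ⋃₀ {U | U ∈ 𝒰 ∧ (U ∩ A).Nonempty}

/-- Iterated star `Stⁿ(A, 𝒰)`. -/
def stn {X : Type u} (n : ℕ) (A : Set X) (𝒰 : Set (Set X)) : Set X :=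
  (fun B => st B 𝒰)^[n] A

/-- `𝒰` is an open cover of the space `X`. -/
def IsOpenCover {X : Type u} [TopologicalSpace X] (𝒰 : Set (Set X)) : Prop :=
  (∀ U ∈ 𝒰, IsOpen U) ∧ ⋃₀ 𝒰 = Set.univ

/-- The weak extent of `X` (by convention at least `ℵ₀`): the least `κ` such that every
open cover `𝒰` of `X` admits `A ⊆ X` with `|A| ≤ κ` and `St(A, 𝒰) = X`. -/
noncomputable def weakExtent (X : Type u) [TopologicalSpace X] : Cardinal.{u} :=
  Cardinal.aleph0 ⊔ sInf {κ | ∀ 𝒰 : Set (Set X), IsOpenCover 𝒰 →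
    ∃ A : Set X, Cardinal.mk ↥A ≤ κ ∧ st A 𝒰 = Set.univ}

/-- The weak double extent of `X` (by convention at least `ℵ₀`): the least `κ` such that
every open cover `𝒰` of `X²` admits `A ⊆ X` with `|A| ≤ κ` and `St(X × A, 𝒰) = X²`. -/
noncomputable def weakDoubleExtent (X : Type u) [TopologicalSpace X] : Cardinal.{u} :=
  Cardinal.aleph0 ⊔ sInf {κ | ∀ 𝒰 : Set (Set (X × X)), IsOpenCover 𝒰 →
    ∃ A : Set X, Cardinal.mk ↥A ≤ κ ∧ st (Set.univ ×ˢ A) 𝒰 = Set.univ}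

/-- `X` has a rank `n` `G_κ`-diagonal: a family of at most `κ` open covers such that
for all `x ≠ y` some cover `𝒰_i` satisfies `y ∉ Stⁿ(x, 𝒰_i)`. -/
def HasRankDiagonal (X : Type u) [TopologicalSpace X] (n : ℕ) (κ : Cardinal.{u}) : Prop :=
  ∃ (ι : Type u) (𝒰 : ι → Set (Set X)), Cardinal.mk ι ≤ κ ∧
    (∀ i, IsOpenCover (𝒰 i)) ∧ ∀ x y : X, x ≠ y → ∃ i, y ∉ stn n {x} (𝒰 i)

/-- `X` has a strong rank `n` `G_κ`-diagonal: a family of at most `κ` open covers such that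
for all `x ≠ y` some cover `𝒰_i` satisfies `y ∉ cl(Stⁿ(x, 𝒰_i))`. -/
def HasStrongRankDiagonal (X : Type u) [TopologicalSpace X] (n : ℕ) (κ : Cardinal.{u}) : Prop :=
  ∃ (ι : Type u) (𝒰 : ι → Set (Set X)), Cardinal.mk ι ≤ κ ∧
    (∀ i, IsOpenCover (𝒰 i)) ∧ ∀ x y : X, x ≠ y → ∃ i, y ∉ closure (stn n {x} (𝒰 i))

/-- for a Hausdorff space `X`, `|X| ≤ we(X)^{Δ₂(X)}`; stated with an arbitrary
infinite cardinal `κ` witnessing a rank 2 `G_κ`-diagonal (in particular for the least such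
`κ`, i.e. `Δ₂(X)`). -/
theorem card_le_weakExtent_pow_Delta2
    (X : Type u) [TopologicalSpace X] [T2Space X] (κ : Cardinal.{u})
    (hκ : Cardinal.aleph0 ≤ κ) (h : HasRankDiagonal X 2 κ) :
    Cardinal.mk X ≤ weakExtent X ^ κ := by
  classical
  obtain ⟨ι, 𝒰, hι, hcov, hsep⟩ := h
  set S : Set Cardinal.{u} := {κ | ∀ 𝒱 : Set (Set X), IsOpenCover 𝒱 →
    ∃ A : Set X, Cardinal.mk ↥A ≤ κ ∧ st A 𝒱 = Set.univ} with hS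
  have hSne : S.Nonempty := by
    refine ⟨Cardinal.mk X, fun 𝒱 h𝒱 => ⟨Set.univ, ?_, ?_⟩⟩
    · rw [Cardinal.mk_univ]
    · apply Set.eq_univ_of_forall
      intro x
      have hx : x ∈ ⋃₀ 𝒱 := h𝒱.2.symm ▸ Set.mem_univ x
      obtain ⟨U, hU, hxU⟩ := hx
      exact ⟨U, ⟨hU, ⟨x, hxU, Set.mem_univ x⟩⟩, hxU⟩
  set τ : Cardinal.{u} := sInf S with hτdef
  have hτS : τ ∈ S := csInf_mem hSne
  have hτle : τ ≤ weakExtent X := le_sup_right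
  -- choose the sets A i
  choose A hAle hAst using fun i => hτS (𝒰 i) (hcov i)
  -- for each x and i, choose a ∈ A i and U ∈ 𝒰 i with x ∈ U, a ∈ U
  have key : ∀ (x : X) (i : ι), ∃ a : ↥(A i), ∃ U ∈ 𝒰 i, x ∈ U ∧ (a : X) ∈ U := by
    intro x i
    have hx : x ∈ st (A i) (𝒰 i) := (hAst i).symm ▸ Set.mem_univ x
    obtain ⟨U, ⟨hU, a, haU, haA⟩, hxU⟩ := hx
    exact ⟨⟨a, haA⟩, U, hU, hxU, haU⟩
  choose f U hU hxU haU using key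
  -- f is injective
  have hf : Function.Injective f := by
    intro x y hxy
    by_contra hne
    obtain ⟨i, hi⟩ := hsep x y hne
    apply hi
    have h2 : stn 2 {x} (𝒰 i) = st (st {x} (𝒰 i)) (𝒰 i) := by
      simp [stn, Function.iterate_succ, Function.iterate_one]
    rw [h2]
    have ha : (f x i : X) ∈ st {x} (𝒰 i) :=
      ⟨U x i, ⟨hU x i, ⟨x, hxU x i, rfl⟩⟩, haU x i⟩
    have hxy' : (f y i : X) ∈ st {x} (𝒰 i) := by rw [← hxy]; exact ha
    exact ⟨U y i, ⟨hU y i, ⟨f y i, haU y i, hxy'⟩⟩, hxU y i⟩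
  have h1 : Cardinal.mk X ≤ Cardinal.mk (∀ i, ↥(A i)) := Cardinal.mk_le_of_injective hf
  have h2 : Cardinal.mk (∀ i, ↥(A i)) ≤ τ ^ Cardinal.mk ι := by
    rw [Cardinal.mk_pi, ← Cardinal.prod_const']
    exact Cardinal.prod_le_prod _ _ hAle
  have hwe0 : (weakExtent X : Cardinal.{u}) ≠ 0 := by
    have : Cardinal.aleph0 ≤ weakExtent X := le_sup_left
    exact fun h0 => by rw [h0] at this; exact Cardinal.aleph0_ne_zero (le_antisymm this zero_le)
  calc Cardinal.mk X ≤ τ ^ Cardinal.mk ι := h1.trans h2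
    _ ≤ weakExtent X ^ Cardinal.mk ι := Cardinal.power_le_power_right hτle
    _ ≤ weakExtent X ^ κ := Cardinal.power_le_power_left hwe0 hι

end DiagonalPaper
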